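/- Let X be a continuous lattice with Scott topology and r(v) = ⋁ v↓. Then r([x]) = x for every x ∈ X, i.e., r ∘ η_X = id_X; consequently (X, r) is an algebra for the open filter monad. -/
import Mathlib


open Set TopologicalSpace

variable {X Y : Type*}

/-- An open filter on a topological space: a lattice-theoretic filter of the
frame of open sets (so it contains `univ` and satisfies
`A ∩ B ∈ v ↔ A ∈ v ∧ B ∈ v` for open `A`, `B`). -/
def IsOpenFilter [TopologicalSpace X] (v : Set (Set X)) : Prop :=
  (∀ A ∈ v, IsOpen A) ∧ Set.univ ∈ v ∧
    ∀ A B : Set X, IsOpen A → IsOpen B → (A ∩ B ∈ v ↔ A ∈ v ∧ B ∈ v)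

/-- `Φ(X)`: the set of open filters of `X`, ordered by inclusion. -/
abbrev OF (X : Type*) [TopologicalSpace X] := {v : Set (Set X) // IsOpenFilter v}

/-- The basic open sets `φ(A) = {v ∈ Φ(X) | A ∈ v}` of the filter space. -/
def phi [TopologicalSpace X] (A : Set X) : Set (OF X) := {v : OF X | A ∈ v.1}

/-- The topology on `Φ(X)` generated by the sets `φ(A)`, `A` open. -/
instance OF.topologicalSpace (X : Type*) [TopologicalSpace X] : TopologicalSpace (OF X) :=
  generateFrom {S | ∃ A : Set X, IsOpen A ∧ S = phi A}

/-- An ideal of a poset: a nonempty directed lower set. -/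
def IsIdeal [Preorder X] (I : Set X) : Prop :=
  I.Nonempty ∧ DirectedOn (· ≤ ·) I ∧ IsLowerSet I

/-- The way-below relation on a complete lattice:
`x ≪ y` iff every ideal whose sup dominates `y` contains `x`. -/
def wayBelow [CompleteLattice X] (x y : X) : Prop :=
  ∀ I : Set X, IsIdeal I → y ≤ sSup I → x ∈ I

/-- A continuous lattice: every element is the sup of the elements way below it. -/
def IsContinuousLattice (X : Type*) [CompleteLattice X] : Prop :=
  ∀ x : X, x = sSup {y | wayBelow y x}

/-- The Scott topology on a complete lattice: open sets are the upper sets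
inaccessible by sups of ideals. -/
instance scottTop (X : Type*) [CompleteLattice X] : TopologicalSpace X where
  IsOpen U := IsUpperSet U ∧ ∀ I : Set X, IsIdeal I → sSup I ∈ U → (I ∩ U).Nonempty
  isOpen_univ := ⟨isUpperSet_univ, fun I hI _ => hI.1.imp fun _ ha => ⟨ha, trivial⟩⟩
  isOpen_inter U V hU hV := ⟨hU.1.inter hV.1, fun I hI hs => by
    obtain ⟨a, haI, haU⟩ := hU.2 I hI hs.1
    obtain ⟨b, hbI, hbV⟩ := hV.2 I hI hs.2
    obtain ⟨c, hcI, hac, hbc⟩ := hI.2.1 a haI b hbI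
    exact ⟨c, hcI, hU.1 hac haU, hV.1 hbc hbV⟩⟩
  isOpen_sUnion S hS := ⟨isUpperSet_sUnion fun s hs => (hS s hs).1, fun I hI hm => by
    obtain ⟨U, hU, hsU⟩ := hm
    obtain ⟨a, haI, haU⟩ := (hS U hU).2 I hI hsU
    exact ⟨a, haI, U, hU, haU⟩⟩

/-- `v↓ = ⋃_{A ∈ v} A↓` where `A↓ = {y | A ⊆ ↑y}`. -/
def downOf [CompleteLattice X] (v : Set (Set X)) : Set X :=
  {y | ∃ A ∈ v, A ⊆ Set.Ici y}

lemma isOpen_phi [TopologicalSpace X] {A : Set X} (hA : IsOpen A) : IsOpen (phi A) :=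
  TopologicalSpace.GenerateOpen.basic _ ⟨A, hA, rfl⟩

lemma phi_univ [TopologicalSpace X] : phi (Set.univ : Set X) = Set.univ :=
  Set.eq_univ_of_forall fun v => v.2.2.1

lemma phi_inter [TopologicalSpace X] {A B : Set X} (hA : IsOpen A) (hB : IsOpen B) :
    phi (A ∩ B) = phi A ∩ phi B :=
  Set.ext fun v => v.2.2.2 A B hA hB

/-- The open-neighborhood filter `[x]` of a point: the unit `η_X`. -/
def etaOF [TopologicalSpace X] (x : X) : OF X :=
  ⟨{A | IsOpen A ∧ x ∈ A}, fun _ hA => hA.1, ⟨isOpen_univ, mem_univ x⟩,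
    fun A B hA hB =>
      ⟨fun h => ⟨⟨hA, h.2.1⟩, ⟨hB, h.2.2⟩⟩, fun h => ⟨hA.inter hB, h.1.2, h.2.2⟩⟩⟩

/-- The open filter `[S] = {B open | S ⊆ B}` of a subset `S`. -/
def nbhdOF [TopologicalSpace X] (S : Set X) : OF X :=
  ⟨{B | IsOpen B ∧ S ⊆ B}, fun _ hA => hA.1, ⟨isOpen_univ, subset_univ S⟩,
    fun A B hA hB =>
      ⟨fun h => ⟨⟨hA, h.2.trans inter_subset_left⟩, ⟨hB, h.2.trans inter_subset_right⟩⟩,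
       fun h => ⟨hA.inter hB, subset_inter h.1.2 h.2.2⟩⟩⟩

/-- The action of `Φ` on a continuous map: `Φ(f)(u) = {B open | f⁻¹(B) ∈ u}`. -/
def mapOF [TopologicalSpace X] [TopologicalSpace Y] (f : X → Y) (hf : Continuous f) :
    OF X → OF Y := fun u =>
  ⟨{B | IsOpen B ∧ f ⁻¹' B ∈ u.1}, fun _ hA => hA.1,
    ⟨isOpen_univ, by simpa using u.2.2.1⟩,
    fun A B hA hB => by
      constructor
      · intro h
        have := (u.2.2.2 (f ⁻¹' A) (f ⁻¹' B) (hA.preimage hf) (hB.preimage hf)).1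
          (by simpa [Set.preimage_inter] using h.2)
        exact ⟨⟨hA, this.1⟩, ⟨hB, this.2⟩⟩
      · intro h
        refine ⟨hA.inter hB, ?_⟩
        rw [Set.preimage_inter]
        exact (u.2.2.2 _ _ (hA.preimage hf) (hB.preimage hf)).2 ⟨h.1.2, h.2.2⟩⟩

/-- The multiplication `μ_X(α) = {A open | φ(A) ∈ α}` of the open filter monad. -/
def muOF [TopologicalSpace X] : OF (OF X) → OF X := fun α =>
  ⟨{A | IsOpen A ∧ phi A ∈ α.1}, fun _ hA => hA.1,
    ⟨isOpen_univ, by rw [phi_univ]; exact α.2.2.1⟩,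
    fun A B hA hB => by
      constructor
      · intro h
        have := (α.2.2.2 (phi A) (phi B) (isOpen_phi hA) (isOpen_phi hB)).1
          (by rw [← phi_inter hA hB]; exact h.2)
        exact ⟨⟨hA, this.1⟩, ⟨hB, this.2⟩⟩
      · intro h
        exact ⟨hA.inter hB, by
          rw [phi_inter hA hB]
          exact (α.2.2.2 _ _ (isOpen_phi hA) (isOpen_phi hB)).2 ⟨h.1.2, h.2.2⟩⟩⟩

section Aux

variable [CompleteLattice X]

lemma scott_isOpen_iff {U : Set X} :
    IsOpen U ↔ IsUpperSet U ∧ ∀ I : Set X, IsIdeal I → sSup I ∈ U → (I ∩ U).Nonempty :=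
  Iff.rfl

lemma isIdeal_Iic (z : X) : IsIdeal (Set.Iic z) :=
  ⟨⟨z, le_refl z⟩, fun a ha b hb => ⟨z, le_refl z, ha, hb⟩, fun _ _ hle hz => hle.trans hz⟩

lemma wb_le {w z : X} (hw : wayBelow w z) : w ≤ z :=
  hw (Set.Iic z) (isIdeal_Iic z) (le_sSup (le_refl z))

lemma wb_mono_right {w z z' : X} (hw : wayBelow w z) (hzz : z ≤ z') : wayBelow w z' :=
  fun I hI hle => hw I hI (hzz.trans hle)

lemma wb_mono_left {w w' z : X} (hw : wayBelow w z) (hww : w' ≤ w) : wayBelow w' z :=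
  fun I hI hle => hI.2.2 hww (hw I hI hle)

lemma wb_bot (z : X) : wayBelow ⊥ z := fun I hI _ => by
  obtain ⟨a, ha⟩ := hI.1
  exact hI.2.2 bot_le ha

lemma wb_sup {w₁ w₂ z : X} (h₁ : wayBelow w₁ z) (h₂ : wayBelow w₂ z) :
    wayBelow (w₁ ⊔ w₂) z := fun I hI hle => by
  obtain ⟨c, hcI, hc₁, hc₂⟩ := hI.2.1 w₁ (h₁ I hI hle) w₂ (h₂ I hI hle)
  exact hI.2.2 (sup_le hc₁ hc₂) hcI

lemma isIdeal_wb (z : X) : IsIdeal {w | wayBelow w z} :=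
  ⟨⟨⊥, wb_bot z⟩, fun a ha b hb => ⟨a ⊔ b, wb_sup ha hb, le_sup_left, le_sup_right⟩,
    fun _ _ hle hz => wb_mono_left hz hle⟩

/-- In a continuous lattice, `{z | w ≪ z}` is Scott-open. -/
lemma isOpen_wbSet (h : IsContinuousLattice X) (w : X) : IsOpen {z | wayBelow w z} := by
  rw [scott_isOpen_iff]
  refine ⟨fun z z' hzz hz => wb_mono_right hz hzz, fun I hI hmem => ?_⟩
  set J : Set X := {u | ∃ z ∈ I, wayBelow u z} with hJ
  have hJideal : IsIdeal J := by
    refine ⟨?_, ?_, ?_⟩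
    · obtain ⟨z, hz⟩ := hI.1
      exact ⟨⊥, z, hz, wb_bot z⟩
    · rintro a ⟨z₁, hz₁, ha⟩ b ⟨z₂, hz₂, hb⟩
      obtain ⟨c, hcI, hc₁, hc₂⟩ := hI.2.1 z₁ hz₁ z₂ hz₂
      exact ⟨a ⊔ b, ⟨c, hcI, wb_sup (wb_mono_right ha hc₁) (wb_mono_right hb hc₂)⟩,
        le_sup_left, le_sup_right⟩
    · rintro a b hle ⟨z, hz, ha⟩
      exact ⟨z, hz, wb_mono_left ha hle⟩
  have hle : sSup I ≤ sSup J := by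
    refine sSup_le fun z hz => ?_
    calc z = sSup {y | wayBelow y z} := h z
    _ ≤ sSup J := sSup_le_sSup fun u hu => ⟨z, hz, hu⟩
  obtain ⟨z, hzI, hwz⟩ := hmem J hJideal hle
  exact ⟨z, hzI, hwz⟩

/-- Interpolation in a continuous lattice. -/
lemma wb_interpolate (h : IsContinuousLattice X) {w y : X} (hw : wayBelow w y) :
    ∃ w', wayBelow w w' ∧ wayBelow w' y := by
  obtain ⟨w', hw'y, hww'⟩ := (scott_isOpen_iff.1 (isOpen_wbSet h w)).2
    {u | wayBelow u y} (isIdeal_wb y) (by rw [← h y]; exact hw)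
  exact ⟨w', hww', hw'y⟩

lemma le_of_wb_le (h : IsContinuousLattice X) {y m : X}
    (hm : ∀ w, wayBelow w y → w ≤ m) : y ≤ m := by
  calc y = sSup {w | wayBelow w y} := h y
  _ ≤ m := sSup_le hm

lemma of_mono (v : OF X) {A B : Set X} (hA : A ∈ v.1) (hB : IsOpen B) (hAB : A ⊆ B) :
    B ∈ v.1 := by
  have := (v.2.2.2 A B (v.2.1 A hA) hB).1 (by rwa [Set.inter_eq_left.2 hAB])
  exact this.2

lemma of_mono' [TopologicalSpace Y] (v : OF Y) {A B : Set Y} (hA : A ∈ v.1)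
    (hB : IsOpen B) (hAB : A ⊆ B) : B ∈ v.1 :=
  ((v.2.2.2 A B (v.2.1 A hA) hB).1 (by rwa [Set.inter_eq_left.2 hAB])).2

lemma isIdeal_downOf (v : OF X) : IsIdeal (downOf v.1) := by
  refine ⟨⟨⊥, Set.univ, v.2.2.1, by simp⟩, ?_, ?_⟩
  · rintro a ⟨A₁, hA₁, hs₁⟩ b ⟨A₂, hA₂, hs₂⟩
    refine ⟨a ⊔ b, ⟨A₁ ∩ A₂, (v.2.2.2 A₁ A₂ (v.2.1 _ hA₁) (v.2.1 _ hA₂)).2 ⟨hA₁, hA₂⟩, ?_⟩,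
      le_sup_left, le_sup_right⟩
    rw [← Set.Ici_inter_Ici]
    exact Set.inter_subset_inter hs₁ hs₂
  · rintro a b hle ⟨A, hA, hs⟩
    exact ⟨A, hA, hs.trans (Set.Ici_subset_Ici.2 hle)⟩

lemma wb_mem_downOf {w : X} {v : OF X} (hw : wayBelow w (sSup (downOf v.1))) :
    w ∈ downOf v.1 :=
  hw (downOf v.1) (isIdeal_downOf v) le_rfl

/-- Preimage of a Scott-open set under `r`. -/
lemma r_preimage (U : Set X) (hU : IsOpen U) :
    (fun v : OF X => sSup (downOf v.1)) ⁻¹' U =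
      ⋃ A ∈ {A : Set X | IsOpen A ∧ ∃ y ∈ U, A ⊆ Set.Ici y}, phi A := by
  ext v
  simp only [Set.mem_preimage, Set.mem_iUnion, Set.mem_setOf_eq]
  constructor
  · intro hv
    obtain ⟨y, ⟨A, hAv, hAy⟩, hyU⟩ := (scott_isOpen_iff.1 hU).2 _ (isIdeal_downOf v) hv
    exact ⟨A, ⟨v.2.1 A hAv, y, hyU, hAy⟩, hAv⟩
  · rintro ⟨A, ⟨_, y, hyU, hAy⟩, hAv⟩
    exact (scott_isOpen_iff.1 hU).1 (le_sSup ⟨A, hAv, hAy⟩) hyU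

lemma r_continuous (h : IsContinuousLattice X) :
    Continuous (fun v : OF X => sSup (downOf v.1)) := by
  rw [continuous_def]
  intro U hU
  rw [r_preimage U hU]
  exact isOpen_biUnion fun A hA => isOpen_phi hA.1

end Aux

/-- for a continuous lattice with `r(v) = ⋁ v↓`, `r([x]) = x` for all
`x` (the unit law `r ∘ η_X = id`); consequently, `r` being continuous and also
satisfying `r ∘ Φ(r) = r ∘ μ_X`, the pair `(X, r)` is a `Φ`-algebra. -/
theorem r_algebra [CompleteLattice X] (h : IsContinuousLattice X) :
    ∃ hc : Continuous (fun v : OF X => sSup (downOf v.1)),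
      (∀ x : X, sSup (downOf (etaOF x).1) = x) ∧
      ∀ α : OF (OF X),
        sSup (downOf (mapOF (fun v : OF X => sSup (downOf v.1)) hc α).1) =
          sSup (downOf (muOF α).1) := by
  refine ⟨r_continuous h, fun x => ?_, fun α => ?_⟩
  · -- unit law
    refine le_antisymm (sSup_le ?_) ?_
    · rintro y ⟨A, ⟨_, hxA⟩, hAy⟩
      exact hAy hxA
    · refine le_of_wb_le h fun w hw => le_sSup ?_
      exact ⟨{z | wayBelow w z}, ⟨isOpen_wbSet h w, hw⟩, fun z hz => wb_le hz⟩
  · -- multiplication law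
    set r : OF X → X := fun v => sSup (downOf v.1) with hr
    refine le_antisymm (sSup_le ?_) (sSup_le ?_)
    · rintro y ⟨B, ⟨hBo, hBα⟩, hBy⟩
      refine le_of_wb_le h fun w hw => le_sSup ?_
      obtain ⟨w', hww', hw'y⟩ := wb_interpolate h hw
      refine ⟨{z | wayBelow w z}, ⟨isOpen_wbSet h w, ?_⟩, fun z hz => wb_le hz⟩
      refine of_mono' α hBα (isOpen_phi (isOpen_wbSet h w)) ?_
      intro v hv
      have hyrv : y ≤ r v := hBy hv
      obtain ⟨A', hA'v, hA'⟩ := wb_mem_downOf (wb_mono_right hw'y hyrv)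
      exact of_mono v hA'v (isOpen_wbSet h w) fun z hz => wb_mono_right hww' (hA' hz)
    · rintro y ⟨A, ⟨hAo, hAα⟩, hAy⟩
      refine le_of_wb_le h fun w hw => le_sSup ?_
      refine ⟨{z | wayBelow w z}, ⟨isOpen_wbSet h w, ?_⟩, fun z hz => wb_le hz⟩
      refine of_mono' α hAα ((isOpen_wbSet h w).preimage (r_continuous h)) ?_
      intro v hv
      exact wb_mono_right hw (le_sSup (⟨A, hv, hAy⟩ : y ∈ downOf v.1))
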